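/- The set of computable elements of (X*, ρ*) is exactly the closure under the pairing operation of the set {o} ∪ {computable elements of (X, ρ)}. -/

import Mathlib

/-- The Moschovakis extension of a type `X`. -/
inductive Mosch (X : Type*) where
  | base : X → Mosch X
  | o : Mosch X
  | pair : Mosch X → Mosch X → Mosch X

/-- The induced representation `ρ*` of `X*`, as a (partial, single-valued)
relation between `ℕ^ℕ` and `X*`:
`ρ*(λk. 2·q(k)+2) = ρ(q)` for `q ∈ dom ρ`; `ρ*(λk. 0) = o`;
`ρ*(λk. 2·J(q(k),r(k))+1) = (ρ*(q), ρ*(r))`; `ρ*` is defined nowhere else. -/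
inductive RhoStar {X : Type*} (J : ℕ → ℕ → ℕ) (ρ : (ℕ → ℕ) →. X) :
    (ℕ → ℕ) → Mosch X → Prop where
  | base {q : ℕ → ℕ} {x : X} : x ∈ ρ q →
      RhoStar J ρ (fun k => 2 * q k + 2) (Mosch.base x)
  | o : RhoStar J ρ (fun _ => 0) Mosch.o
  | pair {q r : ℕ → ℕ} {u v : Mosch X} :
      RhoStar J ρ q u → RhoStar J ρ r v →
      RhoStar J ρ (fun k => 2 * J (q k) (r k) + 1) (Mosch.pair u v)


/-- An element of the represented space `(X*, ρ*)` is computable if it is the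
value of `ρ*` at a computable point of Baire space. -/
def MComputablePt {X : Type*} (J : ℕ → ℕ → ℕ) (ρ : (ℕ → ℕ) →. X)
    (z : Mosch X) : Prop :=
  ∃ p : ℕ → ℕ, Computable p ∧ RhoStar J ρ p z

/-- The closure of a set `S ⊆ X*` under the pairing operation. -/
inductive PairClosure {X : Type*} (S : Set (Mosch X)) : Mosch X → Prop where
  | mem {z : Mosch X} : z ∈ S → PairClosure S z
  | pair {u v : Mosch X} : PairClosure S u → PairClosure S v →
      PairClosure S (Mosch.pair u v)

/-- A computable bijection `ℕ × ℕ → ℕ` has a computable inverse. -/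
theorem exists_computable_inverse (J : ℕ → ℕ → ℕ)
    (hJbij : Function.Bijective (fun p : ℕ × ℕ => J p.1 p.2))
    (hJcomp : Computable (fun p : ℕ × ℕ => J p.1 p.2)) :
    ∃ g : ℕ → ℕ × ℕ, Computable g ∧ ∀ a b, g (J a b) = (a, b) := by
  have hex : ∀ n, ∃ m, J (Nat.unpair m).1 (Nat.unpair m).2 = n := by
    intro n
    obtain ⟨⟨a, b⟩, hab⟩ := hJbij.surjective n
    exact ⟨Nat.pair a b, by simpa using hab⟩
  have hboolc : Computable fun p : ℕ × ℕ =>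
      decide (J (Nat.unpair p.2).1 (Nat.unpair p.2).2 = p.1) := by
    have h1 : Computable fun p : ℕ × ℕ => J (Nat.unpair p.2).1 (Nat.unpair p.2).2 :=
      hJcomp.comp (Computable.unpair.comp Computable.snd)
    exact Primrec.eq.decide.to_comp.comp h1 Computable.fst
  have hfind : Computable fun n : ℕ => Nat.find (hex n) := by
    have hpr : Partrec fun n : ℕ => Nat.rfind fun m =>
        Part.some (decide (J (Nat.unpair m).1 (Nat.unpair m).2 = n)) := by
      apply Partrec.rfind
      exact (hboolc.partrec).to₂
    apply hpr.of_eq_tot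
    intro n
    refine Nat.mem_rfind.mpr ?_
    constructor
    · simp [Nat.find_spec (hex n)]
    · intro m hm
      simp [Nat.find_min (hex n) hm]
  refine ⟨fun n => Nat.unpair (Nat.find (hex n)), Computable.unpair.comp hfind, ?_⟩
  intro a b
  have hs := Nat.find_spec (hex (J a b))
  have : (fun p : ℕ × ℕ => J p.1 p.2) (Nat.unpair (Nat.find (hex (J a b)))) =
      (fun p : ℕ × ℕ => J p.1 p.2) (a, b) := hs
  exact hJbij.injective this

/-- The computable elements of `(X*, ρ*)` are exactly the closure under
pairing of `{o}` together with the computable elements of `(X, ρ)`. -/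
theorem computablePt_eq_pairClosure {X : Type*} (J : ℕ → ℕ → ℕ)
    (ρ : (ℕ → ℕ) →. X)
    (hJbij : Function.Bijective (fun p : ℕ × ℕ => J p.1 p.2))
    (hJge : ∀ m n, m ≤ J m n ∧ n ≤ J m n)
    (hJcomp : Computable (fun p : ℕ × ℕ => J p.1 p.2)) :
    ∀ z : Mosch X, MComputablePt J ρ z ↔
      PairClosure
        (insert Mosch.o
          (Mosch.base '' {x : X | ∃ q : ℕ → ℕ, Computable q ∧ x ∈ ρ q})) z := by
  obtain ⟨g, hgc, hg⟩ := exists_computable_inverse J hJbij hJcomp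
  intro z
  constructor
  · rintro ⟨p, hp, h⟩
    induction h with
    | @base q x hq =>
        have hqc : Computable q := by
          have : Computable fun k => (2 * q k + 2) / 2 - 1 :=
            ((Primrec.nat_sub.comp
              (Primrec.nat_div.comp Primrec.id (Primrec.const 2))
              (Primrec.const 1)).to_comp).comp hp
          refine this.of_eq fun k => ?_
          omega
        exact PairClosure.mem (Or.inr ⟨x, ⟨q, hqc, hq⟩, rfl⟩)
    | o => exact PairClosure.mem (Or.inl rfl)
    | @pair q r u v hu hv ihu ihv =>
        have hJqr : Computable fun k => J (q k) (r k) := by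
          have : Computable fun k => (2 * J (q k) (r k) + 1) / 2 :=
            ((Primrec.nat_div.comp Primrec.id (Primrec.const 2)).to_comp).comp hp
          refine this.of_eq fun k => ?_
          omega
        have hqc : Computable q := by
          have : Computable fun k => (g (J (q k) (r k))).1 :=
            Computable.fst.comp (hgc.comp hJqr)
          refine this.of_eq fun k => ?_
          rw [hg]
        have hrc : Computable r := by
          have : Computable fun k => (g (J (q k) (r k))).2 :=
            Computable.snd.comp (hgc.comp hJqr)
          refine this.of_eq fun k => ?_
          rw [hg]
        exact PairClosure.pair (ihu hqc) (ihv hrc)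
  · intro h
    induction h with
    | mem hz =>
        rcases hz with hz | ⟨x, ⟨q, hqc, hq⟩, rfl⟩
        · subst hz
          exact ⟨fun _ => 0, Computable.const 0, RhoStar.o⟩
        · exact ⟨fun k => 2 * q k + 2,
            ((Primrec.nat_add.comp
              (Primrec.nat_mul.comp (Primrec.const 2) Primrec.id)
              (Primrec.const 2)).to_comp).comp hqc,
            RhoStar.base hq⟩
    | pair hu hv ihu ihv =>
        obtain ⟨q, hqc, hq⟩ := ihu
        obtain ⟨r, hrc, hr⟩ := ihv
        refine ⟨fun k => 2 * J (q k) (r k) + 1, ?_, RhoStar.pair hq hr⟩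
        have hJ : Computable fun k => J (q k) (r k) := hJcomp.comp (hqc.pair hrc)
        exact ((Primrec.nat_add.comp
          (Primrec.nat_mul.comp (Primrec.const 2) Primrec.id)
          (Primrec.const 1)).to_comp).comp hJ
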